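/- For all λ > 0, μ > 0 and t > 0, the mean of the iterated Poisson process equals Σ_{n=0}^∞ n · p_n(t) = λ μ t. -/

import Mathlib

open scoped BigOperators
open Filter MeasureTheory

/-- Bell polynomial: `B n x = e^{-x} * Σ_{k=0}^∞ k^n x^k / k!` (n-th moment of Poisson(x)). -/
noncomputable def bell (n : ℕ) (x : ℝ) : ℝ :=
  Real.exp (-x) * ∑' k : ℕ, (k : ℝ) ^ n * x ^ k / (Nat.factorial k : ℝ)

/-- pmf of the iterated Poisson process:
`p_m(t) = e^{-λt(1-e^{-μ})} (μ^m/m!) B_m(λ t e^{-μ})`. -/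
noncomputable def iterP (lam mu t : ℝ) (m : ℕ) : ℝ :=
  Real.exp (-lam * t * (1 - Real.exp (-mu))) * (mu ^ m / (Nat.factorial m : ℝ)) *
    bell m (lam * t * Real.exp (-mu))

lemma exp_tsum (x : ℝ) : ∑' k : ℕ, x ^ k / (Nat.factorial k : ℝ) = Real.exp x := by
  rw [Real.exp_eq_exp_ℝ, NormedSpace.exp_eq_tsum_div]

lemma pow_le_exp_aux (r : ℝ) (hr : 0 < r) (k m : ℕ) :
    (k : ℝ) ^ m ≤ (Nat.factorial m : ℝ) / r ^ m * Real.exp (r * k) := by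
  have h1 : (r * k) ^ m / (Nat.factorial m : ℝ) ≤ Real.exp (r * k) := by
    have := Real.sum_le_exp_of_nonneg (x := r * k) (by positivity) (m + 1)
    refine le_trans ?_ this
    refine Finset.single_le_sum (f := fun i => (r * (k:ℝ)) ^ i / (Nat.factorial i : ℝ))
      (fun i _ => by positivity) (Finset.self_mem_range_succ m)
  have hfm : (0:ℝ) < Nat.factorial m := by positivity
  rw [div_le_iff₀ hfm, mul_pow] at h1
  rw [div_mul_eq_mul_div, le_div_iff₀ (by positivity)]
  nlinarith [pow_pos hr m]

lemma summable_pow_mul (m : ℕ) {x : ℝ} (hx : 0 ≤ x) :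
    Summable fun k : ℕ => (k : ℝ) ^ m * x ^ k / (Nat.factorial k : ℝ) := by
  refine Summable.of_nonneg_of_le (fun k => by positivity)
    (fun k => ?_)
    (((Real.summable_pow_div_factorial (Real.exp 1 * x)).mul_left
      ((Nat.factorial m : ℝ))))
  have h := pow_le_exp_aux 1 one_pos k m
  have hek : Real.exp (1 * (k:ℝ)) = Real.exp 1 ^ k := by
    rw [one_mul, ← Real.exp_nat_mul]; ring_nf
  rw [hek, one_pow, div_one] at h
  have hxk : (0:ℝ) ≤ x ^ k / (Nat.factorial k : ℝ) := by positivity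
  calc (k : ℝ) ^ m * x ^ k / (Nat.factorial k : ℝ)
      = (k : ℝ) ^ m * (x ^ k / (Nat.factorial k : ℝ)) := by ring
    _ ≤ ((Nat.factorial m : ℝ) * Real.exp 1 ^ k) * (x ^ k / (Nat.factorial k : ℝ)) :=
        mul_le_mul_of_nonneg_right h hxk
    _ = (Nat.factorial m : ℝ) * ((Real.exp 1 * x) ^ k / (Nat.factorial k : ℝ)) := by
        rw [mul_pow]; ring

lemma tsum_pow_mul_le (m : ℕ) {x r : ℝ} (hx : 0 ≤ x) (hr : 0 < r) :
    ∑' k : ℕ, (k : ℝ) ^ m * x ^ k / (Nat.factorial k : ℝ) ≤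
      (Nat.factorial m : ℝ) / r ^ m * Real.exp (x * Real.exp r) := by
  have key : ∀ k : ℕ, (k : ℝ) ^ m * x ^ k / (Nat.factorial k : ℝ) ≤
      (Nat.factorial m : ℝ) / r ^ m * ((x * Real.exp r) ^ k / (Nat.factorial k : ℝ)) := by
    intro k
    have h := pow_le_exp_aux r hr k m
    have hek : Real.exp (r * (k:ℝ)) = Real.exp r ^ k := by
      rw [← Real.exp_nat_mul]; ring_nf
    rw [hek] at h
    have hxk : (0:ℝ) ≤ x ^ k / (Nat.factorial k : ℝ) := by positivity
    calc (k : ℝ) ^ m * x ^ k / (Nat.factorial k : ℝ)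
        = (k : ℝ) ^ m * (x ^ k / (Nat.factorial k : ℝ)) := by ring
      _ ≤ ((Nat.factorial m : ℝ) / r ^ m * Real.exp r ^ k) * (x ^ k / (Nat.factorial k : ℝ)) :=
          mul_le_mul_of_nonneg_right h hxk
      _ = (Nat.factorial m : ℝ) / r ^ m * ((x * Real.exp r) ^ k / (Nat.factorial k : ℝ)) := by
          rw [mul_pow]; ring
  calc ∑' k : ℕ, (k : ℝ) ^ m * x ^ k / (Nat.factorial k : ℝ)
      ≤ ∑' k : ℕ, (Nat.factorial m : ℝ) / r ^ m * ((x * Real.exp r) ^ k / (Nat.factorial k : ℝ)) :=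
        Summable.tsum_le_tsum key (summable_pow_mul m hx)
          ((Real.summable_pow_div_factorial _).mul_left _)
    _ = (Nat.factorial m : ℝ) / r ^ m * Real.exp (x * Real.exp r) := by
        rw [tsum_mul_left, exp_tsum]

lemma tsum_mul_pow_div (x : ℝ) (hx : 0 ≤ x) :
    ∑' k : ℕ, (k : ℝ) * x ^ k / (Nat.factorial k : ℝ) = x * Real.exp x := by
  have hs : Summable fun k : ℕ => (k : ℝ) * x ^ k / (Nat.factorial k : ℝ) := by
    have := summable_pow_mul 1 hx; simpa using this
  rw [Summable.tsum_eq_zero_add hs]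
  have h1 : ∀ k : ℕ, ((k + 1 : ℕ) : ℝ) * x ^ (k + 1) / (Nat.factorial (k + 1) : ℝ)
      = x * (x ^ k / (Nat.factorial k : ℝ)) := by
    intro k
    have hk : ((k:ℝ) + 1) ≠ 0 := by positivity
    rw [Nat.factorial_succ]
    push_cast
    field_simp
    ring
  simp only [h1]
  rw [tsum_mul_left, exp_tsum]
  simp

/-- mean of the iterated Poisson process: `Σ_n n p_n(t) = λμt`. -/
theorem stmt11 (lam mu t : ℝ) (hlam : 0 < lam) (hmu : 0 < mu) (ht : 0 < t) :
    ∑' n : ℕ, (n : ℝ) * iterP lam mu t n = lam * mu * t := by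
  set A : ℝ := lam * t * Real.exp (-mu) with hAdef
  have hA : 0 < A := by positivity
  set g : ℕ → ℕ → ℝ := fun m k =>
    (m : ℝ) * mu ^ m / (Nat.factorial m : ℝ) *
      ((k : ℝ) ^ m * A ^ k / (Nat.factorial k : ℝ)) with hgdef
  set E : ℝ := Real.exp (-lam * t * (1 - Real.exp (-mu))) * Real.exp (-A) with hEdef
  -- rewrite each term
  have hterm : ∀ n : ℕ, (n : ℝ) * iterP lam mu t n = E * ∑' k : ℕ, g n k := by
    intro n
    have : (∑' k : ℕ, g n k) =
        ((n : ℝ) * mu ^ n / (Nat.factorial n : ℝ)) *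
          ∑' k : ℕ, (k : ℝ) ^ n * A ^ k / (Nat.factorial k : ℝ) := tsum_mul_left
    rw [this, iterP, bell]
    ring
  -- summability facts
  have h1 : ∀ m : ℕ, Summable fun k => g m k := fun m =>
    (summable_pow_mul m hA.le).mul_left _
  have hS1 : ∀ y : ℝ, 0 ≤ y → Summable fun m : ℕ => (m : ℝ) * y ^ m / (Nat.factorial m : ℝ) := by
    intro y hy
    simpa using summable_pow_mul 1 hy
  have h2 : ∀ k : ℕ, Summable fun m => g m k := by
    intro k
    refine ((hS1 ((k : ℝ) * mu) (by positivity)).mul_left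
      (A ^ k / (Nat.factorial k : ℝ))).congr fun m => ?_
    simp only [hgdef, mul_pow]
    ring
  -- tsum over m bound for summability of the outer sum
  have hbound : ∀ m : ℕ, ∑' k : ℕ, g m k ≤
      Real.exp (A * Real.exp (2 * mu)) * ((m : ℝ) * (1 / 2) ^ m) := by
    intro m
    have hts : (∑' k : ℕ, g m k) =
        ((m : ℝ) * mu ^ m / (Nat.factorial m : ℝ)) *
          ∑' k : ℕ, (k : ℝ) ^ m * A ^ k / (Nat.factorial k : ℝ) := tsum_mul_left
    rw [hts]
    have hle := tsum_pow_mul_le m hA.le (r := 2 * mu) (by positivity)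
    have hc : (0 : ℝ) ≤ (m : ℝ) * mu ^ m / (Nat.factorial m : ℝ) := by positivity
    calc ((m : ℝ) * mu ^ m / (Nat.factorial m : ℝ)) *
          ∑' k : ℕ, (k : ℝ) ^ m * A ^ k / (Nat.factorial k : ℝ)
        ≤ ((m : ℝ) * mu ^ m / (Nat.factorial m : ℝ)) *
          ((Nat.factorial m : ℝ) / (2 * mu) ^ m * Real.exp (A * Real.exp (2 * mu))) :=
          mul_le_mul_of_nonneg_left hle hc
      _ = Real.exp (A * Real.exp (2 * mu)) * ((m : ℝ) * (1 / 2) ^ m) := by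
          have hfm : ((Nat.factorial m : ℝ)) ≠ 0 := by positivity
          have hmu' : mu ≠ 0 := ne_of_gt hmu
          rw [mul_pow]
          field_simp
          rw [one_div, inv_pow]; field_simp
  have hsum_tsum : Summable fun m : ℕ => ∑' k : ℕ, g m k := by
    refine Summable.of_nonneg_of_le (fun m => tsum_nonneg fun k => by positivity) hbound ?_
    have : Summable fun m : ℕ => (m : ℝ) ^ 1 * (1 / 2 : ℝ) ^ m :=
      summable_pow_mul_geometric_of_norm_lt_one 1 (by norm_num)
    simpa using this.mul_left _
  have hU : Summable (Function.uncurry g) := by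
    refine (summable_prod_of_nonneg fun p => by exact (by positivity : (0:ℝ) ≤ g p.1 p.2)).2
      ⟨fun m => h1 m, hsum_tsum⟩
  -- main computation
  calc ∑' n : ℕ, (n : ℝ) * iterP lam mu t n
      = ∑' n : ℕ, E * ∑' k : ℕ, g n k := tsum_congr hterm
    _ = E * ∑' (n : ℕ) (k : ℕ), g n k := tsum_mul_left
    _ = E * ∑' (k : ℕ) (n : ℕ), g n k := by rw [← Summable.tsum_comm' hU h1 h2]
    _ = E * ∑' k : ℕ, (A ^ k / (Nat.factorial k : ℝ)) *
          (((k : ℝ) * mu) * Real.exp ((k : ℝ) * mu)) := by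
        congr 1
        refine tsum_congr fun k => ?_
        have : ∀ m : ℕ, g m k = (A ^ k / (Nat.factorial k : ℝ)) *
            ((m : ℝ) * ((k : ℝ) * mu) ^ m / (Nat.factorial m : ℝ)) := by
          intro m; simp only [hgdef, mul_pow]; ring
        rw [tsum_congr this, tsum_mul_left, tsum_mul_pow_div _ (by positivity)]
    _ = E * (mu * ∑' k : ℕ, (k : ℝ) * (A * Real.exp mu) ^ k / (Nat.factorial k : ℝ)) := by
        congr 1
        rw [← tsum_mul_left]
        refine tsum_congr fun k => ?_
        have hek : Real.exp ((k : ℝ) * mu) = Real.exp mu ^ k := Real.exp_nat_mul mu k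
        rw [hek, mul_pow]
        ring
    _ = lam * mu * t := by
        rw [tsum_mul_pow_div _ (by positivity)]
        have hAe : A * Real.exp mu = lam * t := by
          rw [hAdef, Real.exp_neg]
          field_simp
        rw [hAe, hEdef, hAdef, ← Real.exp_add]
        have : -lam * t * (1 - Real.exp (-mu)) + -(lam * t * Real.exp (-mu)) + lam * t = 0 := by
          ring
        have h0 : -lam * t * (1 - Real.exp (-mu)) + -(lam * t * Real.exp (-mu)) = -(lam * t) := by
          ring
        rw [h0, Real.exp_neg]
        have hne := Real.exp_ne_zero (lam * t)
        field_simp
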